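/- Let t > 0, weights w₁,…,w_K ∈ ℝ, and positive integers q₁,…,q_K. Suppose p₁,…,p_K are independent and uniformly distributed on [-t, t], and for each i, Q_{q_i}(p_i) is an unbiased stochastic fixed-point quantizer with quantization-interval length s_i = t/q_i and conditional variance Var(Q_{q_i}(p_i) | p_i) = u_i·b_i where b_i = rem(|p_i|, s_i) and u_i = s_i - b_i. Then E_{p₁…p_K}[Var(∑_{i=1}^K w_i Q_{q_i}(p_i))] = (t²/6)·∑_{i=1}^K w_i²/q_i². -/

import Mathlib

open MeasureTheory

noncomputable def gq (s : ℝ) (x : ℝ) : ℝ := (s - (x - s * ⌊x / s⌋)) * (x - s * ⌊x / s⌋)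

lemma gq_meas (s : ℝ) : Measurable (gq s) := by
  unfold gq
  have hf : Measurable fun x : ℝ => x - s * ⌊x / s⌋ :=
    measurable_id.sub (measurable_const.mul
      ((measurable_from_top (f := fun n : ℤ => (n:ℝ))).comp
        (Int.measurable_floor.comp (measurable_id.div_const s))))
  exact (measurable_const.sub hf).mul hf

lemma frac_eq (s x : ℝ) (hs : s ≠ 0) : x - s * ⌊x / s⌋ = s * Int.fract (x / s) := by
  rw [Int.fract]; field_simp

lemma gq_bound (s : ℝ) (hs : 0 < s) (x : ℝ) : ‖gq s x‖ ≤ s ^ 2 := by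
  unfold gq
  rw [frac_eq s x hs.ne']
  have h1 := Int.fract_nonneg (x / s)
  have h2 := (Int.fract_lt_one (x / s)).le
  rw [Real.norm_eq_abs, abs_mul]
  have hb : 0 ≤ s * Int.fract (x / s) := by positivity
  have hb2 : s * Int.fract (x / s) ≤ s := by nlinarith
  rw [abs_of_nonneg hb, abs_of_nonneg (by nlinarith)]
  nlinarith

lemma gq_intInt (s : ℝ) (hs : 0 < s) (a b : ℝ) : IntervalIntegrable (gq s) volume a b := by
  rw [intervalIntegrable_iff]
  refine (integrableOn_const (C := s ^ 2) measure_Ioc_lt_top.ne).mono'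
    ((gq_meas s).aestronglyMeasurable.restrict)
    (Filter.Eventually.of_forall fun x => gq_bound s hs x)

lemma gq_base (s : ℝ) : ∫ x in (0:ℝ)..s, (s - x) * x = s ^ 3 / 6 := by
  have : ∀ x : ℝ, (s - x) * x = s * x - x ^ 2 := by intro x; ring
  simp_rw [this]
  rw [intervalIntegral.integral_sub
      (by apply IntervalIntegrable.const_mul; exact intervalIntegral.intervalIntegrable_id)
      (intervalIntegral.intervalIntegrable_pow 2),
    intervalIntegral.integral_const_mul, integral_id, integral_pow]
  ring

lemma gq_step (s : ℝ) (hs : 0 < s) (n : ℕ) :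
    ∫ x in ((n:ℝ)*s)..((n+1:ℕ)*s), gq s x = s ^ 3 / 6 := by
  have h1 : ∫ x in (0:ℝ)..s, gq s (x + n*s) = ∫ x in ((n:ℝ)*s)..((n+1:ℕ)*s), gq s x := by
    rw [intervalIntegral.integral_comp_add_right]
    norm_num [add_mul, add_comm]
  rw [← h1, ← gq_base s]
  apply intervalIntegral.integral_congr_ae
  have hne : ∀ᵐ x : ℝ, x ≠ s := by
    rw [MeasureTheory.ae_iff]
    simp only [not_not, Set.setOf_eq_eq_singleton]
    exact Real.volume_singleton
  filter_upwards [hne] with x hx hmem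
  rw [Set.uIoc_of_le hs.le] at hmem
  obtain ⟨hx0, hxs⟩ := hmem
  have hxs' : x < s := lt_of_le_of_ne hxs hx
  have hfl : ⌊(x + n*s)/s⌋ = n := by
    rw [Int.floor_eq_iff]
    constructor
    · rw [le_div_iff₀ hs]; push_cast; nlinarith
    · rw [div_lt_iff₀ hs]; push_cast; nlinarith
  unfold gq
  rw [hfl]
  push_cast
  ring

lemma gq_int (s : ℝ) (hs : 0 < s) (n : ℕ) :
    ∫ x in (0:ℝ)..(n*s), gq s x = n * (s ^ 3 / 6) := by
  induction n with
  | zero => simp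
  | succ n ih =>
      have := intervalIntegral.integral_add_adjacent_intervals
        (gq_intInt s hs 0 (n*s)) (gq_intInt s hs (n*s) ((n+1:ℕ)*s))
      rw [← this, ih, gq_step s hs n]
      push_cast
      ring

lemma gqa_meas (s : ℝ) : Measurable (fun x => gq s |x|) := (gq_meas s).comp measurable_abs

lemma gqa_intInt (s : ℝ) (hs : 0 < s) (a b : ℝ) :
    IntervalIntegrable (fun x => gq s |x|) volume a b := by
  rw [intervalIntegrable_iff]
  exact (integrableOn_const (C := s ^ 2) measure_Ioc_lt_top.ne).mono'
    ((gqa_meas s).aestronglyMeasurable.restrict)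
    (Filter.Eventually.of_forall fun x => gq_bound s hs _)

lemma gqa_Icc (s t : ℝ) (hs : 0 < s) (ht : 0 < t) (q : ℕ) (hqs : t = q * s) :
    ∫ x in Set.Icc (-t) t, gq s |x| = 2 * (q * (s ^ 3 / 6)) := by
  rw [MeasureTheory.integral_Icc_eq_integral_Ioc,
      ← intervalIntegral.integral_of_le (by linarith : -t ≤ t),
      ← intervalIntegral.integral_add_adjacent_intervals
        (gqa_intInt s hs (-t) 0) (gqa_intInt s hs 0 t)]
  have h1 : ∫ x in (-t:ℝ)..0, gq s |x| = ∫ x in (0:ℝ)..t, gq s x := by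
    have := intervalIntegral.integral_comp_neg (a := 0) (b := t) (fun x => gq s |x|)
    simp only [abs_neg, neg_zero] at this
    rw [← this]
    apply intervalIntegral.integral_congr
    intro x hx
    rw [Set.uIcc_of_le ht.le] at hx
    show gq s |x| = gq s x; rw [abs_of_nonneg hx.1]
  have h2 : ∫ x in (0:ℝ)..t, gq s |x| = ∫ x in (0:ℝ)..t, gq s x := by
    apply intervalIntegral.integral_congr
    intro x hx
    rw [Set.uIcc_of_le ht.le] at hx
    show gq s |x| = gq s x; rw [abs_of_nonneg hx.1]
  rw [h1, h2, hqs, gq_int s hs q]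
  ring

noncomputable def nu (t : ℝ) : Measure ℝ :=
  (ENNReal.ofReal (1 / (2 * t))) • volume.restrict (Set.Icc (-t) t)

lemma nu_prob (t : ℝ) (ht : 0 < t) : IsProbabilityMeasure (nu t) := by
  constructor
  rw [nu, Measure.smul_apply, Measure.restrict_apply MeasurableSet.univ, Set.univ_inter,
    Real.volume_Icc, smul_eq_mul, ← ENNReal.ofReal_mul (by positivity)]
  rw [show 1 / (2*t) * (t - -t) = 1 by field_simp; ring]
  exact ENNReal.ofReal_one

lemma nu_integral (t : ℝ) (ht : 0 < t) (f : ℝ → ℝ) :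
    ∫ x, f x ∂(nu t) = (1 / (2*t)) * ∫ x in Set.Icc (-t) t, f x := by
  rw [nu, integral_smul_measure, ENNReal.toReal_ofReal (by positivity), smul_eq_mul]

lemma onevar (t s : ℝ) (ht : 0 < t) (q : ℕ) (hq : 0 < q) (hs : s = t / q) :
    ∫ x, gq s |x| ∂(nu t) = s ^ 2 / 6 := by
  have hq' : (0:ℝ) < q := Nat.cast_pos.2 hq
  have hs0 : 0 < s := by rw [hs]; positivity
  have hqs : t = q * s := by rw [hs]; field_simp
  rw [nu_integral t ht, gqa_Icc s t hs0 ht q hqs, hqs]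
  field_simp

lemma map_eval_pi {K : ℕ} (ν : Fin K → Measure ℝ) [∀ i, IsProbabilityMeasure (ν i)] (i : Fin K) :
    (Measure.pi ν).map (Function.eval i) = ν i := by
  ext A hA
  rw [Measure.map_apply (measurable_pi_apply i) hA, Set.eval_preimage, Measure.pi_pi]
  rw [Finset.prod_eq_single i (fun j _ hj => by simp [Function.update_of_ne hj])
    (fun h => absurd (Finset.mem_univ i) h)]
  simp

lemma integral_eval {K : ℕ} (ν : Fin K → Measure ℝ) [∀ i, IsProbabilityMeasure (ν i)]
    (i : Fin K) (f : ℝ → ℝ) (hf : Measurable f) :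
    ∫ p : Fin K → ℝ, f (p i) ∂(Measure.pi ν) = ∫ x, f x ∂(ν i) := by
  have hf' : AEStronglyMeasurable f ((Measure.pi ν).map (Function.eval i)) := by
    rw [map_eval_pi ν i]; exact hf.aestronglyMeasurable
  rw [← map_eval_pi ν i, integral_map (measurable_pi_apply i).aemeasurable hf']

lemma integrable_eval {K : ℕ} (ν : Fin K → Measure ℝ) [∀ i, IsProbabilityMeasure (ν i)]
    (i : Fin K) (f : ℝ → ℝ) (hf : Measurable f) (hi : Integrable f (ν i)) :
    Integrable (fun p : Fin K → ℝ => f (p i)) (Measure.pi ν) := by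
  have hf' : AEStronglyMeasurable f ((Measure.pi ν).map (Function.eval i)) := by
    rw [map_eval_pi ν i]; exact hf.aestronglyMeasurable
  exact (integrable_map_measure hf' (measurable_pi_apply i).aemeasurable).1
    (by rwa [map_eval_pi ν i])

/-- Expected variance of a weighted accumulation of independently stochastically
quantized parameters: if `p₁,…,p_K` are i.i.d. uniform on `[-t,t]` and each quantizer
`Q_{q_i}` has conditional variance `u_i·b_i` with `s_i = t/q_i`, `b_i = rem(|p_i|, s_i)`,
`u_i = s_i - b_i`, then by independence the variance of `∑ w_i Q_{q_i}(p_i)` given the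
parameters is `∑ w_i² u_i b_i`, and its expectation is `(t²/6)·∑ w_i²/q_i²`. -/
theorem expected_variance_weighted_accumulation (K : ℕ) (t : ℝ) (ht : 0 < t)
    (w : Fin K → ℝ) (q : Fin K → ℕ) (hq : ∀ i, 0 < q i)
    (s : Fin K → ℝ) (hs : ∀ i, s i = t / q i)
    (b u : (Fin K → ℝ) → Fin K → ℝ)
    (hb : ∀ p i, b p i = |p i| - s i * ⌊|p i| / s i⌋)
    (hu : ∀ p i, u p i = s i - b p i)
    (μ : Measure (Fin K → ℝ))
    (hμ : μ = Measure.pi fun _ =>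
      (ENNReal.ofReal (1 / (2 * t))) • volume.restrict (Set.Icc (-t) t)) :
    ∫ p, (∑ i, w i ^ 2 * (u p i * b p i)) ∂μ
      = (t ^ 2 / 6) * ∑ i, w i ^ 2 / (q i : ℝ) ^ 2 := by
  haveI hP : IsProbabilityMeasure (nu t) := nu_prob t ht
  haveI hP2 : Fin K → IsProbabilityMeasure (nu t) := fun _ => hP
  haveI : ∀ i : Fin K, IsProbabilityMeasure ((fun _ : Fin K => nu t) i) := fun _ => hP
  have hμ' : μ = Measure.pi fun _ => nu t := hμ
  have hint : ∀ p : Fin K → ℝ, ∀ i, w i ^ 2 * (u p i * b p i) = w i ^ 2 * gq (s i) |p i| := by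
    intro p i
    rw [hu, hb, gq]
  have hs0 : ∀ i, 0 < s i := fun i => by
    have : (0:ℝ) < q i := Nat.cast_pos.2 (hq i)
    rw [hs]; positivity
  have hintg : ∀ i : Fin K, Integrable (fun x => gq (s i) |x|) (nu t) := fun i =>
    (integrable_const ((s i) ^ 2)).mono' (gqa_meas (s i)).aestronglyMeasurable
      (Filter.Eventually.of_forall fun x => gq_bound (s i) (hs0 i) _)
  calc ∫ p, (∑ i, w i ^ 2 * (u p i * b p i)) ∂μ
      = ∫ p, (∑ i, w i ^ 2 * gq (s i) |p i|) ∂(Measure.pi fun _ => nu t) := by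
        rw [← hμ']; exact integral_congr_ae (Filter.Eventually.of_forall fun p => by
          simp only [hint p])
    _ = ∑ i, ∫ p : Fin K → ℝ, w i ^ 2 * gq (s i) |p i| ∂(Measure.pi fun _ => nu t) := by
        apply integral_finset_sum
        intro i _
        exact ((integrable_eval _ i _ (gqa_meas (s i)) (hintg i)).const_mul _)
    _ = ∑ i, w i ^ 2 * ∫ p : Fin K → ℝ, gq (s i) |p i| ∂(Measure.pi fun _ => nu t) := by
        simp_rw [MeasureTheory.integral_const_mul]
    _ = ∑ i, w i ^ 2 * ((s i) ^ 2 / 6) := by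
        congr 1; ext i
        rw [integral_eval _ i _ (gqa_meas (s i)), onevar t (s i) ht (q i) (hq i) (hs i)]
    _ = (t ^ 2 / 6) * ∑ i, w i ^ 2 / (q i : ℝ) ^ 2 := by
        rw [Finset.mul_sum]
        congr 1; ext i
        have hqi : ((q i : ℝ)) ≠ 0 := Nat.cast_ne_zero.2 (hq i).ne'
        rw [hs]
        field_simp
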